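/- arXiv:2111.12005 — 8 statements merged into one kernel-verified Lean document; each statement's English description precedes it below -/
import Mathlib

section
/- Let G and H be locally compact second countable Hausdorff topological groups and let θ : G → H be a continuous homomorphism which is a strict morphism, i.e. the induced continuous bijection G/ker θ → θ(G) is a homeomorphism, where θ(G) carries the subspace topology inherited from H (consequently θ(G) is a locally compact, hence closed, subgroup of H). Let μ be a left Haar measure on G, ν a left Haar measure on θ(G), and λ a left Haar measure on ker θ. Then there exists a real constant c with 0 < c < ∞ such that μ(θ⁻¹(E)) = c · λ(ker θ) · ν(E) for every Borel set E ⊆ θ(G). -/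
open MeasureTheory
open Pointwise

/-- If `θ : G → H` is a continuous strict morphism (the induced bijection
`G/ker θ → θ(G)` is a homeomorphism), `μ`, `ν`, `lam` are Haar measures on `G`, `θ(G)`,
`ker θ`, then there is a finite positive constant `c` with
`μ(θ⁻¹(E)) = c · lam(ker θ) · ν(E)` for all Borel `E ⊆ θ(G)`. -/
theorem strict_morphism_haar_preimage {G H : Type*}
    [Group G] [TopologicalSpace G] [IsTopologicalGroup G] [LocallyCompactSpace G]
    [SecondCountableTopology G] [T2Space G] [MeasurableSpace G] [BorelSpace G]
    [Group H] [TopologicalSpace H] [IsTopologicalGroup H] [LocallyCompactSpace H]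
    [SecondCountableTopology H] [T2Space H] [MeasurableSpace H] [BorelSpace H]
    (θ : G →* H) (hθ : Continuous θ)
    (hstrict : IsHomeomorph (⇑(QuotientGroup.quotientKerEquivRange θ)))
    (μ : Measure G) (ν : Measure θ.range) (lam : Measure θ.ker)
    [μ.IsHaarMeasure] [μ.Regular] [ν.IsHaarMeasure] [ν.Regular]
    [lam.IsHaarMeasure] [lam.Regular] :
    ∃ c : ENNReal, 0 < c ∧ c < ⊤ ∧
      ∀ E : Set θ.range, MeasurableSet E →
        μ (⇑θ ⁻¹' (Subtype.val '' E)) = c * lam Set.univ * ν E := by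
  classical
  haveI hSC : SecondCountableTopology θ.range :=
    TopologicalSpace.Subtype.secondCountableTopology (θ.range : Set H)
  haveI hBR : BorelSpace θ.range := Subtype.borelSpace (θ.range : Set H)
  set q : G →* θ.range := θ.rangeRestrict with hq_def
  have hq_cont : Continuous q := Continuous.subtype_mk hθ _
  have hq_meas : Measurable q := hq_cont.measurable
  have hq_surj : Function.Surjective q := θ.rangeRestrict_surjective
  have hpre : ∀ E : Set θ.range, ⇑θ ⁻¹' (Subtype.val '' E) = ⇑q ⁻¹' E := by
    intro E
    ext x
    simp only [Set.mem_preimage]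
    constructor
    · rintro ⟨y, hyE, hy⟩
      have : q x = y := Subtype.ext hy.symm
      rw [this]; exact hyE
    · intro hx
      exact ⟨q x, hx, rfl⟩
  -- the homeomorphism from the quotient
  let e : (G ⧸ θ.ker) ≃ₜ θ.range := hstrict.homeomorph _
  have he : ∀ g : G, e (QuotientGroup.mk g) = q g := fun g => rfl
  haveI hLC : LocallyCompactSpace θ.range := e.locallyCompactSpace_iff.mp inferInstance
  haveI : SigmaFinite ν := by infer_instance
  haveI : SigmaFinite μ := by infer_instance
  have hμuniv : μ Set.univ ≠ 0 := (isOpen_univ.measure_pos μ Set.univ_nonempty).ne'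
  have hνuniv : ν Set.univ ≠ 0 := (isOpen_univ.measure_pos ν Set.univ_nonempty).ne'
  -- Lemma A : null sets correspond
  have lemA : ∀ S : Set θ.range, MeasurableSet S → (μ (⇑q ⁻¹' S) = 0 ↔ ν S = 0) := by
    intro S hS
    have hmap : Measurable (fun p : G × θ.range => p.2⁻¹ * q p.1) :=
      (measurable_snd.inv).mul (hq_meas.comp measurable_fst)
    set A : Set (G × θ.range) := (fun p : G × θ.range => p.2⁻¹ * q p.1) ⁻¹' S with hA
    have hAm : MeasurableSet A := hmap hS
    have h1 : (μ.prod ν) A = ν S⁻¹ * μ Set.univ := by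
      rw [Measure.prod_apply hAm]
      have hsl : ∀ g : G, ν (Prod.mk g ⁻¹' A) = ν S⁻¹ := by
        intro g
        have : Prod.mk g ⁻¹' A = (fun x : θ.range => (q g)⁻¹ * x) ⁻¹' S⁻¹ := by
          ext x
          simp only [hA, Set.mem_preimage, Set.mem_inv, mul_inv_rev, inv_inv]
        rw [this, measure_preimage_mul]
      simp only [hsl]
      rw [lintegral_const]
    have h2 : (μ.prod ν) A = μ (⇑q ⁻¹' S) * ν Set.univ := by
      rw [Measure.prod_apply_symm hAm]
      have hsl : ∀ x : θ.range, μ ((fun g : G => (g, x)) ⁻¹' A) = μ (⇑q ⁻¹' S) := by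
        intro x
        obtain ⟨g₀, hg₀⟩ := hq_surj x
        have : ((fun g : G => (g, x)) ⁻¹' A) = (fun g : G => g₀⁻¹ * g) ⁻¹' (⇑q ⁻¹' S) := by
          ext g
          simp only [hA, Set.mem_preimage, map_mul, map_inv, hg₀]
        rw [this, measure_preimage_mul]
      simp only [hsl]
      rw [lintegral_const]
    have hAB : ν S⁻¹ * μ Set.univ = μ (⇑q ⁻¹' S) * ν Set.univ := h1 ▸ h2
    constructor
    · intro h
      rw [h, zero_mul] at hAB
      rcases mul_eq_zero.mp hAB with h' | h'
      · exact (measure_inv_null ν).mp h'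
      · exact absurd h' hμuniv
    · intro h
      have h' : ν S⁻¹ = 0 := (measure_inv_null ν).mpr h
      rw [h', zero_mul] at hAB
      rcases mul_eq_zero.mp hAB.symm with h'' | h''
      · exact h''
      · exact absurd h'' hνuniv
  by_cases hKc : IsCompact (θ.ker : Set G)
  · -- kernel compact
    haveI : CompactSpace θ.ker := isCompact_iff_compactSpace.mp hKc
    have hlam_top : lam Set.univ ≠ ⊤ := (IsCompact.measure_lt_top isCompact_univ).ne
    have hlam_pos : lam Set.univ ≠ 0 := (isOpen_univ.measure_pos lam Set.univ_nonempty).ne'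
    have hproper : ∀ C : Set θ.range, IsCompact C → μ (⇑q ⁻¹' C) < ⊤ := by
      intro C hC
      have hD : IsCompact (⇑e ⁻¹' C) := e.isCompact_preimage.mpr hC
      obtain ⟨L, hLcomp, hDL⟩ : ∃ L : Set G, IsCompact L ∧
          ⇑e ⁻¹' C ⊆ QuotientGroup.mk '' L := by
        have hnb : ∀ d : G ⧸ θ.ker, ∃ N : Set G, IsCompact N ∧
            QuotientGroup.mk '' N ∈ nhds d := by
          intro d
          obtain ⟨g, rfl⟩ := QuotientGroup.mk_surjective d
          obtain ⟨N, hNc, hNn⟩ := exists_compact_mem_nhds g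
          exact ⟨N, hNc, QuotientGroup.isOpenMap_coe.image_mem_nhds hNn⟩
        choose N hNc hNn using hnb
        obtain ⟨t, -, ht⟩ := hD.elim_nhds_subcover (fun d => QuotientGroup.mk '' N d)
          (fun d _ => hNn d)
        refine ⟨⋃ d ∈ t, N d, t.finite_toSet.isCompact_biUnion (fun d _ => hNc d), ?_⟩
        intro x hx
        obtain ⟨d, hdt, hxd⟩ := Set.mem_iUnion₂.mp (ht hx)
        obtain ⟨y, hy, hyx⟩ := hxd
        exact ⟨y, Set.mem_biUnion hdt hy, hyx⟩
      have hsub : ⇑q ⁻¹' C ⊆ L * (θ.ker : Set G) := by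
        intro x hx
        have hx' : QuotientGroup.mk x ∈ ⇑e ⁻¹' C := by
          show e (QuotientGroup.mk x) ∈ C
          rw [he]; exact hx
        obtain ⟨l, hlL, hl⟩ := hDL hx'
        refine ⟨l, hlL, l⁻¹ * x, ?_, by group⟩
        exact (QuotientGroup.eq).mp hl
      exact lt_of_le_of_lt (measure_mono hsub) (hLcomp.mul hKc).measure_lt_top
    haveI hinv1 : (μ.map ⇑q).IsMulLeftInvariant :=
      MeasureTheory.isMulLeftInvariant_map q.toMulHom hq_meas hq_surj
    haveI hinv2 : (μ.map ⇑q).IsOpenPosMeasure := by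
      constructor
      intro U hU hUne
      rw [Measure.map_apply hq_meas hU.measurableSet]
      exact ((hU.preimage hq_cont).measure_pos μ (hUne.preimage hq_surj)).ne'
    haveI hinv3 : IsFiniteMeasureOnCompacts (μ.map ⇑q) := by
      constructor
      intro C hC
      rw [Measure.map_apply hq_meas hC.measurableSet]
      exact hproper C hC
    haveI : (μ.map ⇑q).IsHaarMeasure := ⟨⟩
    have huniq := Measure.isMulLeftInvariant_eq_smul (μ.map ⇑q) ν
    set c₀ : NNReal := Measure.haarScalarFactor (μ.map ⇑q) ν with hc₀def
    have hc₀ : 0 < c₀ := Measure.haarScalarFactor_pos_of_isHaarMeasure (μ.map ⇑q) ν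
    refine ⟨(c₀ : ENNReal) / lam Set.univ, ?_, ?_, ?_⟩
    · exact ENNReal.div_pos (by exact_mod_cast hc₀.ne') hlam_top
    · exact ENNReal.div_lt_top (by simp) hlam_pos
    · intro E hE
      have h1 : μ (⇑θ ⁻¹' (Subtype.val '' E)) = (μ.map ⇑q) E := by
        rw [Measure.map_apply hq_meas hE, hpre]
      rw [h1, huniq, ENNReal.div_mul_cancel hlam_pos hlam_top]
      simp only [Measure.smul_apply, ENNReal.smul_def, smul_eq_mul]
  · -- kernel not compact
    have hker_closed : IsClosed (θ.ker : Set G) := by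
      have : (θ.ker : Set G) = ⇑θ ⁻¹' {1} := by
        ext x; simp [MonoidHom.mem_ker]
      rw [this]
      exact isClosed_singleton.preimage hθ
    haveI : BorelSpace θ.ker := Subtype.borelSpace (θ.ker : Set G)
    haveI : LocallyCompactSpace θ.ker := hker_closed.locallyCompactSpace
    haveI : NoncompactSpace θ.ker :=
      not_compactSpace_iff.mp (fun h => hKc (isCompact_iff_compactSpace.mpr h))
    have hlam : lam Set.univ = ⊤ := MeasureTheory.measure_univ_of_isMulLeftInvariant lam
    refine ⟨1, one_pos, ENNReal.one_lt_top, ?_⟩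
    intro E hE
    rw [hpre, hlam, one_mul]
    by_cases hνE : ν E = 0
    · rw [hνE, mul_zero]
      exact (lemA E hE).mpr hνE
    · rw [ENNReal.top_mul hνE]
      by_contra hne
      have hX : μ (⇑q ⁻¹' E) < ⊤ := lt_top_iff_ne_top.mpr hne
      have hEpre : MeasurableSet (⇑q ⁻¹' E) := hq_meas hE
      have hXpos : 0 < μ (⇑q ⁻¹' E) :=
        pos_iff_ne_zero.mpr (fun h => hνE ((lemA E hE).mp h))
      obtain ⟨W, hWsub, hWc, hlt⟩ := hEpre.exists_isCompact_lt_add hX.ne hXpos.ne'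
      have hWpos : 0 < μ W := by
        rcases eq_or_lt_of_le (zero_le : 0 ≤ μ W) with hz | hp
        · rw [← hz, zero_add] at hlt
          exact absurd hlt (lt_irrefl _)
        · exact hp
      have hWtop : μ W ≠ ⊤ := (lt_of_le_of_lt (measure_mono hWsub) hX).ne
      have hWne : W.Nonempty := nonempty_of_measure_ne_zero hWpos.ne'
      have hqk : ∀ k ∈ θ.ker, q k = 1 := by
        intro k hk
        have h1 : θ k = 1 := hk
        have h2 : (q k : H) = 1 := by rw [hq_def]; simpa using h1
        exact Subtype.ext h2
      have hinv : ∀ k ∈ θ.ker, ∀ x ∈ ⇑q ⁻¹' E, k * x ∈ ⇑q ⁻¹' E := by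
        intro k hk x hx
        show q (k * x) ∈ E
        rw [map_mul, hqk k hk, one_mul]
        exact hx
      have key : ∀ C : Set G, IsCompact C → ∃ k ∈ θ.ker, k ∉ C := by
        intro C hC
        by_contra h
        push_neg at h
        exact hKc (hC.of_isClosed_subset hker_closed (fun k hk => h k hk))
      have hsmulW : ∀ k : G, μ (k • W) = μ W := by
        intro k
        have : k • W = (fun x : G => k⁻¹ * x) ⁻¹' W := by
          ext x
          simp [Set.mem_smul_set_iff_inv_smul_mem]
        rw [this, measure_preimage_mul]
      have hone_mem : (1 : G) ∈ W * W⁻¹ := by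
        obtain ⟨w, hw⟩ := hWne
        exact ⟨w, hw, w⁻¹, Set.inv_mem_inv.mpr hw, mul_inv_cancel w⟩
      have hfin : ∀ n : ℕ, ∃ F : Finset G, F.card = n ∧ (↑F : Set G) ⊆ (θ.ker : Set G) ∧
          (↑F : Set G).PairwiseDisjoint (fun k => k • W) := by
        intro n
        induction n with
        | zero => exact ⟨∅, rfl, by simp, by simp⟩
        | succ n ih =>
          obtain ⟨F, hcard, hFker, hFdisj⟩ := ih
          have hCcomp : IsCompact (⋃ k ∈ F, k • (W * W⁻¹)) :=
            F.finite_toSet.isCompact_biUnion (fun k _ => (hWc.mul hWc.inv).smul k)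
          obtain ⟨k', hk'ker, hk'C⟩ := key _ hCcomp
          have hk'F : k' ∉ F := by
            intro hmem
            exact hk'C (Set.mem_biUnion hmem ⟨1, hone_mem, by simp⟩)
          refine ⟨insert k' F, ?_, ?_, ?_⟩
          · rw [Finset.card_insert_of_notMem hk'F, hcard]
          · intro x hx
            rcases Finset.mem_insert.mp hx with h | h
            · rw [h]; exact hk'ker
            · exact hFker h
          · rw [Finset.coe_insert]
            refine Set.pairwiseDisjoint_insert.mpr ⟨hFdisj, ?_⟩
            intro k hkF hne'
            rw [Set.disjoint_left]
            rintro x ⟨w1, hw1, hx1e⟩ ⟨w2, hw2, hx2e⟩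
            apply hk'C
            refine Set.mem_biUnion hkF ?_
            refine ⟨w2 * w1⁻¹, ⟨w2, hw2, w1⁻¹, Set.inv_mem_inv.mpr hw1, rfl⟩, ?_⟩
            show k • (w2 * w1⁻¹) = k'
            simp only [smul_eq_mul] at hx1e hx2e ⊢
            rw [← mul_assoc, hx2e, ← hx1e]
            group
      have hbound : ∀ n : ℕ, (n : ENNReal) * μ W ≤ μ (⇑q ⁻¹' E) := by
        intro n
        obtain ⟨F, hcard, hFker, hFdisj⟩ := hfin n
        have hsub : (⋃ k ∈ F, k • W) ⊆ ⇑q ⁻¹' E := by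
          intro x hx
          obtain ⟨k, hkF, hxk⟩ := Set.mem_iUnion₂.mp hx
          obtain ⟨w, hw, rfl⟩ := hxk
          exact hinv k (hFker hkF) w (hWsub hw)
        have hmono := measure_mono (μ := μ) hsub
        rw [measure_biUnion_finset hFdisj
          (fun k _ => ((hWc.smul k).isClosed).measurableSet)] at hmono
        simp only [hsmulW] at hmono
        rwa [Finset.sum_const, hcard, nsmul_eq_mul] at hmono
      obtain ⟨n, hn⟩ := ENNReal.exists_nat_gt (ENNReal.div_lt_top hX.ne hWpos.ne').ne
      have hlt' : μ (⇑q ⁻¹' E) < (n : ENNReal) * μ W := by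
        rw [← ENNReal.div_lt_iff (Or.inl hWpos.ne') (Or.inl hWtop)]
        exact hn
      exact absurd (hbound n) (not_le.mpr hlt')
end

section
/- Let G and H be locally compact second countable Hausdorff topological groups and let θ : G → H be a continuous homomorphism such that the image θ(G) is an open subgroup of H. Then θ is an open map: for every open set U ⊆ G, the image θ(U) is open in H. -/
/-- A continuous homomorphism between locally compact second countable groups with open
image is an open map. -/
theorem isOpenMap_of_open_range {G H : Type*}
    [Group G] [TopologicalSpace G] [IsTopologicalGroup G] [LocallyCompactSpace G]
    [SecondCountableTopology G] [T2Space G]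
    [Group H] [TopologicalSpace H] [IsTopologicalGroup H] [LocallyCompactSpace H]
    [SecondCountableTopology H] [T2Space H]
    (θ : G →* H) (hθ : Continuous θ) (hopen : IsOpen (Set.range θ)) :
    IsOpenMap θ := by
  have hr : IsOpen (θ.range : Set H) := hopen
  have : LocallyCompactSpace θ.range := hr.locallyCompactSpace
  have : BaireSpace θ.range := BaireSpace.of_t2Space_locallyCompactSpace
  have h1 : IsOpenMap (θ.rangeRestrict) :=
    MonoidHom.isOpenMap_of_sigmaCompact _ θ.rangeRestrict_surjective
      (continuous_induced_rng.2 hθ)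
  have h2 : IsOpenMap ((↑) : θ.range → H) := hr.isOpenMap_subtype_val
  have : (θ : G → H) = ((↑) : θ.range → H) ∘ θ.rangeRestrict := rfl
  rw [this]
  exact h2.comp h1
end

section
/- Let G and H be locally compact second countable Hausdorff topological groups with left Haar measures μ and ν respectively, and let θ : G → H be a continuous homomorphism. Then the pushforward measure θ_*(μ) is absolutely continuous with respect to ν if and only if the image θ(G) is an open subgroup of H. -/
open MeasureTheory
open scoped Pointwise

/-- For a continuous homomorphism `θ : G → H` of locally compact second countable groups
with Haar measures `μ`, `ν`, the pushforward `θ_*(μ)` is absolutely continuous with respect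
to `ν` iff `θ(G)` is an open subgroup of `H`. -/
theorem pushforward_absolutelyContinuous_iff_open_range {G H : Type*}
    [Group G] [TopologicalSpace G] [IsTopologicalGroup G] [LocallyCompactSpace G]
    [SecondCountableTopology G] [T2Space G] [MeasurableSpace G] [BorelSpace G]
    [Group H] [TopologicalSpace H] [IsTopologicalGroup H] [LocallyCompactSpace H]
    [SecondCountableTopology H] [T2Space H] [MeasurableSpace H] [BorelSpace H]
    (μ : Measure G) (ν : Measure H) [μ.IsHaarMeasure] [μ.Regular]
    [ν.IsHaarMeasure] [ν.Regular]
    (θ : G →* H) (hθ : Continuous θ) :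
    Measure.map θ μ ≪ ν ↔ IsOpen (Set.range θ) := by
  have hθm : Measurable θ := hθ.measurable
  have hσμ : SigmaFinite μ := sigmaFinite_of_locallyFinite
  have hσν : SigmaFinite ν := sigmaFinite_of_locallyFinite
  constructor
  · intro hAC
    have hmeas : MeasurableSet (Set.range θ) := by
      obtain ⟨K, hKc, hKU⟩ := isSigmaCompact_range hθ
      rw [← hKU]
      exact MeasurableSet.iUnion fun n => (hKc n).measurableSet
    have hpos : 0 < ν (Set.range θ) := by
      rw [pos_iff_ne_zero]
      intro h0
      have h1 := hAC h0
      rw [Measure.map_apply hθm hmeas] at h1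
      have : θ ⁻¹' Set.range θ = Set.univ := by
        ext x; simp [Set.mem_range]
      rw [this] at h1
      exact (isOpen_univ.measure_ne_zero μ ⟨1, trivial⟩) h1
    have hnhds := Measure.div_mem_nhds_one_of_haar_pos ν (Set.range θ) hmeas hpos
    have hsub : Set.range θ / Set.range θ ⊆ Set.range θ := by
      rintro x ⟨a, ⟨g1, rfl⟩, b, ⟨g2, rfl⟩, rfl⟩
      exact ⟨g1 * g2⁻¹, by simp [div_eq_mul_inv]⟩
    have : (θ.range : Set H) ∈ nhds (1 : H) := by
      rw [MonoidHom.coe_range]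
      exact Filter.mem_of_superset hnhds hsub
    simpa using Subgroup.isOpen_of_mem_nhds θ.range this
  · intro hopen
    apply Measure.AbsolutelyContinuous.mk
    intro E hE hνE
    rw [Measure.map_apply hθm hE]
    set s : Set (G × H) := {p | θ p.1 * p.2 ∈ E} with hs
    have hsm : MeasurableSet s :=
      ((hθm.comp measurable_fst).mul measurable_snd) hE
    have h1 : (μ.prod ν) s = 0 := by
      rw [Measure.prod_apply hsm]
      have hz : ∀ g : G, ν (Prod.mk g ⁻¹' s) = 0 := fun g => by
        have he : Prod.mk g ⁻¹' s = (fun h => θ g * h) ⁻¹' E := rfl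
        rw [he, measure_preimage_mul]
        exact hνE
      simp [hz]
    rw [Measure.prod_apply_symm hsm] at h1
    have h2 : (fun h => μ ((fun g => (g, h)) ⁻¹' s)) =ᵐ[ν] 0 :=
      (lintegral_eq_zero_iff (measurable_measure_prodMk_right hsm)).mp h1
    have hν_range : ν (Set.range θ) ≠ 0 :=
      (hopen.measure_ne_zero ν ⟨1, 1, map_one θ⟩)
    have hbad : ν {h | μ ((fun g => (g, h)) ⁻¹' s) ≠ 0} = 0 := by
      simpa using MeasureTheory.ae_iff.mp h2
    obtain ⟨h0, ⟨g0, rfl⟩, hgood⟩ :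
        ∃ h0 ∈ Set.range θ, μ ((fun g => (g, h0)) ⁻¹' s) = 0 := by
      by_contra hcon
      push_neg at hcon
      exact hν_range (measure_mono_null (fun x hx => hcon x hx) hbad)
    have he2 : (fun g => (g, θ g0)) ⁻¹' s = (fun x => x * g0) ⁻¹' (θ ⁻¹' E) := by
      ext g; simp [hs, Set.mem_preimage, map_mul]
    rw [he2, measure_mul_right_null] at hgood
    exact hgood
end

section
/- Let G and H be locally compact second countable Hausdorff topological groups with left Haar measures μ and ν respectively, and let θ : G → H be a continuous homomorphism whose image θ(G) is an open subgroup of H. Let λ be a left Haar measure on ker θ. Then there exists a real constant c with 0 < c < ∞ such that for every Borel set E ⊆ H one has μ(θ⁻¹(E)) = c · λ(ker θ) · ν(E ∩ θ(G)); in particular μ(θ⁻¹(E)) ≤ c · λ(ker θ) · ν(E) for every Borel set E ⊆ H. -/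
open MeasureTheory Filter Set Function
open scoped Pointwise Topology ENNReal

section Aux

variable {G H : Type*}
    [Group G] [TopologicalSpace G] [IsTopologicalGroup G] [LocallyCompactSpace G]
    [SecondCountableTopology G] [T2Space G] [MeasurableSpace G] [BorelSpace G]
    [Group H] [TopologicalSpace H] [IsTopologicalGroup H] [LocallyCompactSpace H]
    [SecondCountableTopology H] [T2Space H] [MeasurableSpace H] [BorelSpace H]

/-- Fubini computation: integrating the measure of translated preimages. -/
lemma haar_aux_fubini (μ : Measure G) (ν : Measure H) [μ.IsHaarMeasure] [μ.Regular]
    [ν.IsHaarMeasure] [ν.Regular] (θ : G →* H) (hθ : Continuous θ)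
    {A : Set H} (hA : MeasurableSet A) {C : Set G} (hC : MeasurableSet C) :
    ∫⁻ h, μ ({x | h⁻¹ * θ x ∈ A} ∩ C) ∂ν = ν A⁻¹ * μ C := by
  set T : Set (H × G) := {p | p.1⁻¹ * θ p.2 ∈ A ∧ p.2 ∈ C} with hT_def
  have hT : MeasurableSet T := by
    have h1 : Measurable fun p : H × G => p.1⁻¹ * θ p.2 :=
      (measurable_fst.inv).mul (hθ.measurable.comp measurable_snd)
    exact (h1 hA).inter (measurable_snd hC)
  have key : ∀ h : H, μ ({x | h⁻¹ * θ x ∈ A} ∩ C) = ∫⁻ x, T.indicator 1 (h, x) ∂μ := by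
    intro h
    have hslice : MeasurableSet (Prod.mk h ⁻¹' T) := measurable_prodMk_left hT
    have : (Prod.mk h ⁻¹' T) = {x | h⁻¹ * θ x ∈ A} ∩ C := rfl
    rw [← this, ← lintegral_indicator_one hslice]
    rfl
  calc ∫⁻ h, μ ({x | h⁻¹ * θ x ∈ A} ∩ C) ∂ν
      = ∫⁻ h, ∫⁻ x, T.indicator 1 (h, x) ∂μ ∂ν := by
        exact lintegral_congr key
    _ = ∫⁻ x, ∫⁻ h, T.indicator 1 (h, x) ∂ν ∂μ := by
        apply lintegral_lintegral_swap
        exact (measurable_one.indicator hT).aemeasurable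
    _ = ∫⁻ x, C.indicator (fun _ => ν A⁻¹) x ∂μ := by
        apply lintegral_congr
        intro x
        have hslice : ((fun h : H => (h, x)) ⁻¹' T) = {h | h⁻¹ * θ x ∈ A ∧ x ∈ C} := rfl
        have hmeas : MeasurableSet ((fun h : H => (h, x)) ⁻¹' T) := measurable_prodMk_right hT
        have : ∫⁻ h, T.indicator 1 (h, x) ∂ν = ν ((fun h : H => (h, x)) ⁻¹' T) := by
          rw [← lintegral_indicator_one hmeas]; rfl
        rw [this]
        by_cases hx : x ∈ C
        · have h2 : ((fun h : H => (h, x)) ⁻¹' T) = (fun h : H => (θ x)⁻¹ * h) ⁻¹' A⁻¹ := by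
            ext h
            simp only [hslice, Set.mem_setOf_eq, Set.mem_preimage, Set.mem_inv, hx, and_true,
              mul_inv_rev, inv_inv]
          rw [h2, measure_preimage_mul, Set.indicator_of_mem hx]
        · have h2 : ((fun h : H => (h, x)) ⁻¹' T) = ∅ := by
            ext h; simp [hslice, hx]
          rw [h2, measure_empty, Set.indicator_of_notMem hx]
    _ = ν A⁻¹ * μ C := by
        rw [lintegral_indicator hC, setLIntegral_const, mul_comm]

/-- If `A ⊆ range θ` is `ν`-null, then `θ⁻¹(A)` is `μ`-null. -/
lemma haar_aux_null (μ : Measure G) (ν : Measure H) [μ.IsHaarMeasure] [μ.Regular]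
    [ν.IsHaarMeasure] [ν.Regular] (θ : G →* H) (hθ : Continuous θ)
    (hopen : IsOpen (Set.range θ))
    {A : Set H} (hA : MeasurableSet A) (h0 : ν A = 0) : μ (⇑θ ⁻¹' A) = 0 := by
  have hinv : ν A⁻¹ = 0 := (measure_inv_null ν).mpr h0
  have hC : ∀ n : ℕ, MeasurableSet (compactCovering G n) :=
    fun n => (isCompact_compactCovering G n).isClosed.measurableSet
  have hzero : ∀ n : ℕ, ∫⁻ h, μ ({x | h⁻¹ * θ x ∈ A} ∩ compactCovering G n) ∂ν = 0 := by
    intro n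
    rw [haar_aux_fubini μ ν θ hθ hA (hC n), hinv, zero_mul]
  have hmeasf : ∀ n : ℕ, Measurable fun h : H => μ ({x | h⁻¹ * θ x ∈ A} ∩ compactCovering G n) := by
    intro n
    have h1 : Measurable fun p : H × G => p.1⁻¹ * θ p.2 :=
      (measurable_fst.inv).mul (hθ.measurable.comp measurable_snd)
    have hT : MeasurableSet {p : H × G | p.1⁻¹ * θ p.2 ∈ A ∧ p.2 ∈ compactCovering G n} :=
      (h1 hA).inter (measurable_snd (hC n))
    exact measurable_measure_prodMk_left hT
  have hae : ∀ n : ℕ, ∀ᵐ h ∂ν, μ ({x | h⁻¹ * θ x ∈ A} ∩ compactCovering G n) = 0 := by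
    intro n
    exact (lintegral_eq_zero_iff (hmeasf n)).mp (hzero n)
  have hae' : ∀ᵐ h ∂ν, ∀ n : ℕ, μ ({x | h⁻¹ * θ x ∈ A} ∩ compactCovering G n) = 0 :=
    ae_all_iff.mpr hae
  -- find a point of `range θ` satisfying the a.e. property
  have hνrange : ν (Set.range θ) ≠ 0 :=
    hopen.measure_ne_zero ν ⟨θ 1, Set.mem_range_self 1⟩
  have hexists : ∃ h₀ ∈ Set.range ⇑θ, ∀ n : ℕ,
      μ ({x | h₀⁻¹ * θ x ∈ A} ∩ compactCovering G n) = 0 := by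
    by_contra hcon
    push_neg at hcon
    have : Set.range ⇑θ ⊆ {h | ¬ ∀ n : ℕ, μ ({x | h⁻¹ * θ x ∈ A} ∩ compactCovering G n) = 0} := by
      intro h hh
      obtain ⟨n, hn⟩ := hcon h hh
      exact fun hall => hn (hall n)
    exact hνrange (measure_mono_null this hae')
  obtain ⟨h₀, ⟨g₀, rfl⟩, hall⟩ := hexists
  have hB : μ {x | (θ g₀)⁻¹ * θ x ∈ A} = 0 := by
    have hsub : {x | (θ g₀)⁻¹ * θ x ∈ A} ⊆
        ⋃ n : ℕ, ({x | (θ g₀)⁻¹ * θ x ∈ A} ∩ compactCovering G n) := by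
      intro x hx
      obtain ⟨n, hn⟩ := exists_mem_compactCovering x
      exact Set.mem_iUnion.mpr ⟨n, hx, hn⟩
    exact measure_mono_null hsub (measure_iUnion_null fun n => hall n)
  have heq : {x | (θ g₀)⁻¹ * θ x ∈ A} = (fun x => g₀⁻¹ * x) ⁻¹' (⇑θ ⁻¹' A) := by
    ext x; simp [Set.mem_preimage, map_mul, map_inv]
  rw [heq] at hB
  rwa [measure_preimage_mul] at hB

/-- Conversely, if `θ⁻¹(A)` is `μ`-null and `A ⊆ range θ`, then `A` is `ν`-null. -/
lemma haar_aux_null' (μ : Measure G) (ν : Measure H) [μ.IsHaarMeasure] [μ.Regular]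
    [ν.IsHaarMeasure] [ν.Regular] (θ : G →* H) (hθ : Continuous θ)
    {A : Set H} (hA : MeasurableSet A) (hAS : A ⊆ Set.range θ)
    (h0 : μ (⇑θ ⁻¹' A) = 0) : ν A = 0 := by
  obtain ⟨C, hCcomp, hCnhds⟩ := exists_compact_mem_nhds (1 : G)
  have hCpos : μ C ≠ 0 := (Measure.measure_pos_of_mem_nhds μ hCnhds).ne'
  have hCmeas : MeasurableSet C := hCcomp.isClosed.measurableSet
  have hzero : ∀ h : H, μ ({x | h⁻¹ * θ x ∈ A} ∩ C) = 0 := by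
    intro h
    by_cases hh : h ∈ Set.range ⇑θ
    · obtain ⟨g, rfl⟩ := hh
      have heq : {x | (θ g)⁻¹ * θ x ∈ A} = (fun x => g⁻¹ * x) ⁻¹' (⇑θ ⁻¹' A) := by
        ext x; simp [Set.mem_preimage, map_mul, map_inv]
      apply measure_mono_null (Set.inter_subset_left)
      rw [heq, measure_preimage_mul]
      exact h0
    · have : {x | h⁻¹ * θ x ∈ A} = ∅ := by
        ext x
        simp only [Set.mem_setOf_eq, Set.mem_empty_iff_false, iff_false]
        intro hmem
        obtain ⟨y, hy⟩ := hAS hmem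
        exact hh ⟨x * y⁻¹, by rw [map_mul, map_inv, hy]; group⟩
      rw [this, Set.empty_inter, measure_empty]
  have := haar_aux_fubini μ ν θ hθ hA hCmeas
  rw [lintegral_congr hzero, lintegral_zero] at this
  have hAinv : ν A⁻¹ = 0 := by
    rcases mul_eq_zero.mp this.symm with h | h
    · exact h
    · exact absurd h hCpos
  exact (measure_inv_null ν).mp hAinv

/-- A set invariant under left translation by a noncompact closed subgroup has
measure zero or infinity. -/
lemma haar_aux_top (μ : Measure G) [μ.IsHaarMeasure] [μ.Regular] (θ : G →* H)
    (hθ : Continuous θ) (hker : ¬ IsCompact ((θ.ker : Subgroup G) : Set G))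
    {B : Set G} (hBmeas : MeasurableSet B)
    (hB : ∀ k ∈ θ.ker, k • B ⊆ B)
    (hpos : μ B ≠ 0) : μ B = ⊤ := by
  by_contra htop
  have hkerclosed : IsClosed ((θ.ker : Subgroup G) : Set G) := by
    have : ((θ.ker : Subgroup G) : Set G) = ⇑θ ⁻¹' {1} := by
      ext x; simp [MonoidHom.mem_ker]
    rw [this]
    exact IsClosed.preimage hθ isClosed_singleton
  -- find a compact subset of positive measure
  obtain ⟨K, hKB, hKcomp, hKlt⟩ :=
    hBmeas.exists_isCompact_lt_add htop (ENNReal.half_pos hpos).ne'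
  have hKpos : 0 < μ K := by
    by_contra hK0
    push_neg at hK0
    have : μ K = 0 := le_antisymm hK0 zero_le
    rw [this, zero_add] at hKlt
    exact absurd hKlt (not_lt.mpr (ENNReal.half_le_self))
  have hKclosed : IsClosed K := hKcomp.isClosed
  -- disjoint translates by kernel elements
  have A : ∀ Lset : Set G, IsCompact Lset → ∃ g, g ∈ θ.ker ∧ Disjoint Lset (g • K) := by
    intro Lset hLset
    have hnotsub : ¬ ((θ.ker : Subgroup G) : Set G) ⊆ Lset * K⁻¹ := by
      intro hsub
      exact hker (IsCompact.of_isClosed_subset (hLset.mul hKcomp.inv) hkerclosed hsub)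
    obtain ⟨g, hgker, hgnot⟩ : ∃ g, g ∈ θ.ker ∧ g ∉ Lset * K⁻¹ := by
      by_contra hcon
      push_neg at hcon
      exact hnotsub fun g hg => hcon g hg
    refine ⟨g, hgker, Set.disjoint_left.2 fun a ha h'a => hgnot ?_⟩
    rcases h'a with ⟨b, bK, rfl⟩
    refine ⟨g * b, ha, b⁻¹, by simpa only [Set.mem_inv, inv_inv] using bK, ?_⟩
    simp only [smul_eq_mul, mul_inv_cancel_right]
  choose! g hgker hgdisj using A
  set L : ℕ → Set G := fun n => (fun T => T ∪ g T • K)^[n] K with hL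
  have Lcompact : ∀ n, IsCompact (L n) := by
    intro n
    induction' n with n IH
    · exact hKcomp
    · simp_rw [L, iterate_succ']
      exact IsCompact.union IH (hKcomp.smul (g (L n)))
  have Lclosed : ∀ n, IsClosed (L n) := by
    intro n
    induction' n with n IH
    · exact hKclosed
    · simp_rw [L, iterate_succ']
      exact IsClosed.union IH (hKclosed.smul (g (L n)))
  have LB : ∀ n, L n ⊆ B := by
    intro n
    induction' n with n IH
    · exact hKB
    · simp_rw [L, iterate_succ']
      apply Set.union_subset IH
      calc g (L n) • K ⊆ g (L n) • B := Set.smul_set_mono hKB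
        _ ⊆ B := hB _ (hgker _ (Lcompact n))
  have M : ∀ n, μ (L n) = (n + 1 : ℕ) * μ K := by
    intro n
    induction' n with n IH
    · simp only [L, one_mul, Nat.cast_one, iterate_zero, id, Nat.zero_add]
    · calc
        μ (L (n + 1)) = μ (L n) + μ (g (L n) • K) := by
          simp_rw [L, iterate_succ']
          exact measure_union' (hgdisj _ (Lcompact _)) (Lclosed _).measurableSet
        _ = (n + 1 + 1 : ℕ) * μ K := by
          simp only [IH, measure_smul, add_mul, Nat.cast_add, Nat.cast_one, one_mul]
  have N : Tendsto (fun n => μ (L n)) atTop (𝓝 (∞ * μ K)) := by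
    simp_rw [M]
    apply ENNReal.Tendsto.mul_const _ (Or.inl ENNReal.top_ne_zero)
    exact ENNReal.tendsto_nat_nhds_top.comp (tendsto_add_atTop_nat _)
  simp only [ENNReal.top_mul', hKpos.ne', if_false] at N
  exact htop (top_le_iff.1 (le_of_tendsto' N fun n => measure_mono (LB n)))

end Aux

/-- If `θ : G → H` is a continuous homomorphism with open image, `μ`, `ν` Haar measures on
`G`, `H` and `lam` a Haar measure on `ker θ`, then there is a finite positive constant `c`
such that `μ(θ⁻¹(E)) = c · lam(ker θ) · ν(E ∩ θ(G))`, and in particular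
`μ(θ⁻¹(E)) ≤ c · lam(ker θ) · ν(E)`, for every Borel `E ⊆ H`. -/
theorem haar_preimage_of_open_range {G H : Type*}
    [Group G] [TopologicalSpace G] [IsTopologicalGroup G] [LocallyCompactSpace G]
    [SecondCountableTopology G] [T2Space G] [MeasurableSpace G] [BorelSpace G]
    [Group H] [TopologicalSpace H] [IsTopologicalGroup H] [LocallyCompactSpace H]
    [SecondCountableTopology H] [T2Space H] [MeasurableSpace H] [BorelSpace H]
    (μ : Measure G) (ν : Measure H) [μ.IsHaarMeasure] [μ.Regular]
    [ν.IsHaarMeasure] [ν.Regular]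
    (θ : G →* H) (hθ : Continuous θ) (hopen : IsOpen (Set.range θ))
    (lam : Measure θ.ker) [lam.IsHaarMeasure] [lam.Regular] :
    ∃ c : ENNReal, 0 < c ∧ c < ⊤ ∧
      (∀ E : Set H, MeasurableSet E →
        μ (⇑θ ⁻¹' E) = c * lam Set.univ * ν (E ∩ Set.range θ)) ∧
      (∀ E : Set H, MeasurableSet E →
        μ (⇑θ ⁻¹' E) ≤ c * lam Set.univ * ν E) := by
  by_cases hker : IsCompact ((θ.ker : Subgroup G) : Set G)
  · -- compact kernel case
    set S : Subgroup H := θ.range with hS_def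
    have hSopen : IsOpen (S : Set H) := by rwa [MonoidHom.coe_range]
    have hSmeas : MeasurableSet (S : Set H) := hSopen.measurableSet
    haveI : LocallyCompactSpace S := hSopen.locallyCompactSpace
    haveI : BorelSpace ↥S := Subtype.borelSpace (S : Set H)
    haveI : SecondCountableTopology ↥S := TopologicalSpace.secondCountableTopology_induced ↥S H _
    set ν' : Measure S := Measure.comap ((↑) : S → H) ν with hν'_def
    have emb : MeasurableEmbedding ((↑) : S → H) := MeasurableEmbedding.subtype_coe hSmeas
    have hν'apply : ∀ A : Set S, ν' A = ν (((↑) : S → H) '' A) := fun A => emb.comap_apply ν A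
    haveI hinv' : ν'.IsMulLeftInvariant := by
      constructor
      intro g
      ext A hA
      rw [Measure.map_apply (measurable_const_mul g) hA, hν'apply, hν'apply]
      have himg : ((↑) : S → H) '' ((fun x => g * x) ⁻¹' A)
          = (fun x => (g : H) * x) ⁻¹' (((↑) : S → H) '' A) := by
        ext x
        constructor
        · rintro ⟨y, hy, rfl⟩
          exact ⟨g * y, hy, rfl⟩
        · rintro ⟨z, hz, hzx⟩
          have hxS : x ∈ (S : Set H) := by
            have : (g : H)⁻¹ * (z : H) = x := by rw [hzx]; group
            rw [← this]
            exact S.mul_mem (S.inv_mem g.2) z.2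
          refine ⟨⟨x, hxS⟩, ?_, rfl⟩
          have hgx : g * (⟨x, hxS⟩ : S) = z := by
            apply Subtype.ext
            simp [← hzx]
          show g * (⟨x, hxS⟩ : S) ∈ A
          rw [hgx]; exact hz
      rw [himg, measure_preimage_mul]
    haveI hopos' : ν'.IsOpenPosMeasure := by
      constructor
      intro U hU hUne
      rw [hν'apply]
      exact (hSopen.isOpenMap_subtype_val U hU).measure_ne_zero ν (hUne.image _)
    haveI hfc' : IsFiniteMeasureOnCompacts ν' := by
      constructor
      intro K hK
      rw [hν'apply]
      exact (hK.image continuous_subtype_val).measure_lt_top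
    haveI : ν'.IsHaarMeasure := ⟨⟩
    set θ' : G →* S := θ.rangeRestrict with hθ'_def
    have hθ'cont : Continuous θ' := hθ.subtype_mk _
    have hsurj : Function.Surjective θ' := θ.rangeRestrict_surjective
    set μ'' : Measure S := Measure.map θ' μ with hμ''_def
    haveI : μ''.IsMulLeftInvariant :=
      isMulLeftInvariant_map θ'.toMulHom hθ'cont.measurable hsurj
    haveI : μ''.IsOpenPosMeasure := hθ'cont.isOpenPosMeasure_map hsurj
    haveI : IsFiniteMeasureOnCompacts μ'' := by
      constructor
      intro K hK
      rw [hμ''_def, Measure.map_apply hθ'cont.measurable hK.isClosed.measurableSet]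
      have hopenmap : IsOpenMap θ' := MonoidHom.isOpenMap_of_sigmaCompact θ' hsurj hθ'cont
      have hcov : ∀ k : S, ∃ L : Set G, IsCompact L ∧ (⇑θ' '' L) ∈ 𝓝 k := by
        intro k
        obtain ⟨gk, hgk⟩ := hsurj k
        obtain ⟨L, hLc, hLn⟩ := exists_compact_mem_nhds gk
        exact ⟨L, hLc, by simpa [hgk] using hopenmap.image_mem_nhds hLn⟩
      choose L hLc hLn using hcov
      obtain ⟨t, ht⟩ := hK.elim_nhds_subcover (fun k => ⇑θ' '' L k) (fun k _ => hLn k)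
      have hLtc : IsCompact (⋃ k ∈ t, L k) := t.finite_toSet.isCompact_biUnion fun k _ => hLc k
      have hsub : ⇑θ' ⁻¹' K ⊆ (⋃ k ∈ t, L k) * ((θ.ker : Subgroup G) : Set G) := by
        intro x hx
        obtain ⟨k, hkt, v, hvL, hv⟩ : ∃ k ∈ t, ∃ v ∈ L k, θ' v = θ' x := by
          have := ht.2 hx
          simp only [Set.mem_iUnion] at this
          obtain ⟨k, hkt, v, hvL, hv⟩ := this
          exact ⟨k, hkt, v, hvL, hv⟩
        refine ⟨v, Set.mem_biUnion hkt hvL, v⁻¹ * x, ?_, by group⟩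
        have : θ v = θ x := congrArg Subtype.val hv
        simp [MonoidHom.mem_ker, map_mul, map_inv, this]
      exact lt_of_le_of_lt (measure_mono hsub) (hLtc.mul hker).measure_lt_top
    haveI : μ''.IsHaarMeasure := ⟨⟩
    have huniq : μ'' = Measure.haarScalarFactor μ'' ν' • ν' :=
      Measure.isMulLeftInvariant_eq_smul μ'' ν'
    set c₀ : NNReal := Measure.haarScalarFactor μ'' ν' with hc₀_def
    have hc₀pos : 0 < c₀ := Measure.haarScalarFactor_pos_of_isHaarMeasure μ'' ν'
    -- the kernel has finite positive measure
    haveI : CompactSpace θ.ker := isCompact_iff_compactSpace.mp hker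
    have hL₀pos : 0 < lam Set.univ := isOpen_univ.measure_pos lam Set.univ_nonempty
    have hL₀top : lam Set.univ ≠ ⊤ := measure_ne_top lam Set.univ
    have hcancel : (c₀ : ℝ≥0∞) / lam Set.univ * lam Set.univ = (c₀ : ℝ≥0∞) :=
      ENNReal.div_mul_cancel hL₀pos.ne' hL₀top
    have key : ∀ E : Set H, MeasurableSet E →
        μ (⇑θ ⁻¹' E) = (c₀ : ℝ≥0∞) * ν (E ∩ Set.range ⇑θ) := by
      intro E hE
      have hpre : ⇑θ ⁻¹' E = ⇑θ' ⁻¹' (((↑) : S → H) ⁻¹' E) := rfl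
      have hEmeas : MeasurableSet (((↑) : S → H) ⁻¹' E) := measurable_subtype_coe hE
      have himg : (((↑) : S → H) '' (((↑) : S → H) ⁻¹' E)) = E ∩ Set.range ⇑θ := by
        ext x
        constructor
        · rintro ⟨y, hy, rfl⟩
          exact ⟨hy, MonoidHom.mem_range.mp y.2⟩
        · rintro ⟨hxE, hxR⟩
          exact ⟨⟨x, MonoidHom.mem_range.mpr hxR⟩, hxE, rfl⟩
      rw [hpre, ← Measure.map_apply hθ'cont.measurable hEmeas, ← hμ''_def, huniq,
        Measure.smul_apply, hν'apply, ENNReal.smul_def, himg, smul_eq_mul]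
    refine ⟨(c₀ : ℝ≥0∞) / lam Set.univ, ENNReal.div_pos (ENNReal.coe_pos.2 hc₀pos).ne' hL₀top,
      ENNReal.div_lt_top ENNReal.coe_ne_top hL₀pos.ne', ?_, ?_⟩
    · intro E hE
      rw [key E hE, hcancel]
    · intro E hE
      rw [key E hE, hcancel]
      exact mul_le_mul_right (measure_mono Set.inter_subset_left) _
  · -- noncompact kernel case
    have hkerclosed : IsClosed ((θ.ker : Subgroup G) : Set G) := by
      have : ((θ.ker : Subgroup G) : Set G) = ⇑θ ⁻¹' {1} := by
        ext x; simp [MonoidHom.mem_ker]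
      rw [this]
      exact IsClosed.preimage hθ isClosed_singleton
    haveI : LocallyCompactSpace θ.ker := hkerclosed.locallyCompactSpace
    haveI : BorelSpace ↥θ.ker := Subtype.borelSpace ((θ.ker : Subgroup G) : Set G)
    haveI : NoncompactSpace θ.ker := by
      apply not_compactSpace_iff.mp
      intro hcs
      exact hker (isCompact_iff_compactSpace.mpr hcs)
    have hlamtop : lam Set.univ = ⊤ := measure_univ_of_isMulLeftInvariant lam
    have heq : ∀ E : Set H, MeasurableSet E →
        μ (⇑θ ⁻¹' E) = (1 : ℝ≥0∞) * lam Set.univ * ν (E ∩ Set.range ⇑θ) := by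
      intro E hE
      set A : Set H := E ∩ Set.range ⇑θ with hA_def
      have hAmeas : MeasurableSet A := hE.inter hopen.measurableSet
      have hAS : A ⊆ Set.range ⇑θ := Set.inter_subset_right
      have hpre : ⇑θ ⁻¹' E = ⇑θ ⁻¹' A := by
        ext x; simp [hA_def, Set.mem_range_self]
      rw [hpre, one_mul, hlamtop]
      by_cases hν : ν A = 0
      · rw [hν, mul_zero]
        exact haar_aux_null μ ν θ hθ hopen hAmeas hν
      · rw [ENNReal.top_mul hν]
        have hμpos : μ (⇑θ ⁻¹' A) ≠ 0 := fun h0 =>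
          hν (haar_aux_null' μ ν θ hθ hAmeas hAS h0)
        apply haar_aux_top μ θ hθ hker (hθ.measurable hAmeas) ?_ hμpos
        intro k hk
        rintro x ⟨y, hy, rfl⟩
        have hk1 : θ k = 1 := MonoidHom.mem_ker.mp hk
        have : θ (k * y) = θ y := by
          rw [map_mul, hk1, one_mul]
        simpa [Set.mem_preimage, this] using hy
    refine ⟨1, one_pos, ENNReal.one_lt_top, heq, fun E hE => ?_⟩
    rw [heq E hE]
    exact mul_le_mul_right (measure_mono Set.inter_subset_left) _
end

section
/- Let G and H be locally compact second countable Hausdorff topological groups with left Haar measures μ and ν respectively, and let θ : G → H be a continuous homomorphism such that the pushforward θ_*(μ) is absolutely continuous with respect to ν. If ker θ is compact, then θ_*(μ), restricted to the (open) subgroup θ(G) of H, is a left Haar measure on θ(G): that is, the measure on θ(G) (with its subspace topology) given by E ↦ μ(θ⁻¹(E)) for Borel E ⊆ θ(G) is a nonzero, left-invariant, regular Borel measure that is finite on compact sets. -/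
open MeasureTheory Set Filter Pointwise Topology

/-- If `θ : G → H` is a continuous homomorphism with `θ_*(μ) ≪ ν` (Haar measures) and
compact kernel, then the pushforward of `μ` to the subgroup `θ(G)` (via the range
corestriction of `θ`) is a Haar measure on `θ(G)`: a nonzero left-invariant regular Borel
measure, finite on compact sets. -/
theorem pushforward_isHaar_of_compact_ker {G H : Type*}
    [Group G] [TopologicalSpace G] [IsTopologicalGroup G] [LocallyCompactSpace G]
    [SecondCountableTopology G] [T2Space G] [MeasurableSpace G] [BorelSpace G]
    [Group H] [TopologicalSpace H] [IsTopologicalGroup H] [LocallyCompactSpace H]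
    [SecondCountableTopology H] [T2Space H] [MeasurableSpace H] [BorelSpace H]
    (μ : Measure G) (ν : Measure H) [μ.IsHaarMeasure] [μ.Regular]
    [ν.IsHaarMeasure] [ν.Regular]
    (θ : G →* H) (hθ : Continuous θ)
    (habs : Measure.map θ μ ≪ ν)
    (hker : IsCompact (θ.ker : Set G)) :
    (Measure.map θ.rangeRestrict μ).IsHaarMeasure ∧
      (Measure.map θ.rangeRestrict μ).Regular := by
  -- Step 1: the range of `θ` is open in `H`.
  obtain ⟨K, hKc, hKn⟩ := exists_compact_mem_nhds (1 : G)
  have hKpos : 0 < μ K :=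
    lt_of_lt_of_le (isOpen_interior.measure_pos μ ⟨1, mem_interior_iff_mem_nhds.mpr hKn⟩)
      (measure_mono interior_subset)
  have hθK : IsCompact (θ '' K) := hKc.image hθ
  have hmapθK : 0 < (Measure.map θ μ) (θ '' K) := by
    rw [Measure.map_apply hθ.measurable hθK.measurableSet]
    exact lt_of_lt_of_le hKpos (measure_mono (subset_preimage_image θ K))
  have hνθK : 0 < ν (θ '' K) := by
    rcases eq_or_lt_of_le (zero_le (a := ν (θ '' K))) with h | h
    · exact absurd (habs h.symm) hmapθK.ne'
    · exact h
  have hdiv : (θ '' K) / (θ '' K) ∈ 𝓝 (1 : H) :=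
    ν.div_mem_nhds_one_of_haar_pos (θ '' K) hθK.measurableSet hνθK
  have hsub : (θ '' K) / (θ '' K) ⊆ (θ.range : Set H) := by
    rintro x ⟨a, ha, b, hb, rfl⟩
    obtain ⟨a', _, rfl⟩ := ha
    obtain ⟨b', _, rfl⟩ := hb
    exact ⟨a' / b', by simp [div_eq_mul_inv]⟩
  have hopen : IsOpen (θ.range : Set H) :=
    Subgroup.isOpen_of_mem_nhds θ.range (mem_of_superset hdiv hsub)
  -- instances on the range
  haveI : LocallyCompactSpace θ.range := hopen.isOpenEmbedding_subtypeVal.locallyCompactSpace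
  -- the corestriction is continuous, surjective and open
  have hcont : Continuous θ.rangeRestrict := hθ.subtype_mk _
  have hsurj : Function.Surjective θ.rangeRestrict := θ.rangeRestrict_surjective
  have hOM : IsOpenMap θ.rangeRestrict :=
    θ.rangeRestrict.isOpenMap_of_sigmaCompact hsurj hcont
  -- Step 2: the corestriction is proper (tends to cocompact).
  have hprop : Tendsto θ.rangeRestrict (cocompact G) (cocompact θ.range) := by
    intro s hs
    obtain ⟨C, hC, hCs⟩ := mem_cocompact.mp hs
    -- cover `C` by images of compact sets
    have key : ∀ k : θ.range, ∃ U : Set G, IsCompact U ∧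
        θ.rangeRestrict '' U ∈ 𝓝 k := by
      intro k
      obtain ⟨g, hg⟩ := hsurj k
      obtain ⟨U, hUc, hUn⟩ := exists_compact_mem_nhds g
      exact ⟨U, hUc, hg ▸ hOM.image_mem_nhds hUn⟩
    choose U hUc hUn using key
    obtain ⟨t, -, ht⟩ := hC.elim_nhds_subcover (fun k => θ.rangeRestrict '' U k)
      (fun k _ => hUn k)
    set L : Set G := (⋃ k ∈ t, U k) * (θ.ker : Set G) with hL
    have hLc : IsCompact L :=
      (t.finite_toSet.isCompact_biUnion fun k _ => hUc k).mul hker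
    have hpre : θ.rangeRestrict ⁻¹' C ⊆ L := by
      intro x hx
      obtain ⟨k, hkt, l, hl, hlx⟩ := by
        have := ht hx
        simpa only [mem_iUnion, mem_image, exists_prop] using this
      refine ⟨l, by exact mem_biUnion hkt hl, l⁻¹ * x, ?_, by group⟩
      have : θ l = θ x := congrArg Subtype.val hlx
      simp [MonoidHom.mem_ker, this]
    rw [mem_map]
    refine mem_of_superset hLc.compl_mem_cocompact fun x hx => ?_
    exact hCs fun hxC => hx (hpre hxC)
  -- Step 3: conclude
  haveI : BorelSpace θ.range := Subtype.borelSpace (θ.range : Set H)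
  haveI hHaar : (Measure.map θ.rangeRestrict μ).IsHaarMeasure :=
    μ.isHaarMeasure_map θ.rangeRestrict hcont hsurj hprop
  haveI : SecondCountableTopology θ.range :=
    hopen.isOpenEmbedding_subtypeVal.toIsEmbedding.secondCountableTopology
  haveI : SigmaCompactSpace θ.range := inferInstance
  haveI : TopologicalSpace.PseudoMetrizableSpace θ.range := inferInstance
  haveI : IsLocallyFiniteMeasure (Measure.map θ.rangeRestrict μ) := inferInstance
  exact ⟨hHaar, inferInstance⟩
end

section
/- Let G and H be locally compact second countable Hausdorff topological groups with left Haar measures μ and ν respectively, and let θ : G → H be a continuous homomorphism such that the pushforward θ_*(μ) is absolutely continuous with respect to ν. If ker θ is not compact, then μ(θ⁻¹(E)) ∈ {0, +∞} for every Borel set E ⊆ θ(G). -/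
open MeasureTheory Pointwise

/-- If `θ : G → H` is a continuous homomorphism with `θ_*(μ) ≪ ν` (Haar measures) and
non-compact kernel, then `μ(θ⁻¹(E)) ∈ {0, +∞}` for every Borel `E ⊆ θ(G)`. -/
theorem pushforward_zero_or_top_of_noncompact_ker {G H : Type*}
    [Group G] [TopologicalSpace G] [IsTopologicalGroup G] [LocallyCompactSpace G]
    [SecondCountableTopology G] [T2Space G] [MeasurableSpace G] [BorelSpace G]
    [Group H] [TopologicalSpace H] [IsTopologicalGroup H] [LocallyCompactSpace H]
    [SecondCountableTopology H] [T2Space H] [MeasurableSpace H] [BorelSpace H]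
    (μ : Measure G) (ν : Measure H) [μ.IsHaarMeasure] [μ.Regular]
    [ν.IsHaarMeasure] [ν.Regular]
    (θ : G →* H) (hθ : Continuous θ)
    (habs : Measure.map θ μ ≪ ν)
    (hker : ¬ IsCompact (θ.ker : Set G)) :
    ∀ E : Set H, MeasurableSet E → E ⊆ Set.range θ →
      μ (⇑θ ⁻¹' E) = 0 ∨ μ (⇑θ ⁻¹' E) = ⊤ := by
  intro E hE _
  by_contra hcon
  push_neg at hcon
  obtain ⟨h0, htop⟩ := hcon
  set A := ⇑θ ⁻¹' E with hAdef
  have hAmeas : MeasurableSet A := hE.preimage hθ.measurable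
  obtain ⟨C, hCA, hCc, hClt⟩ := hAmeas.exists_isCompact_lt_add htop h0
  have hCpos : μ C ≠ 0 := by
    intro hz
    rw [hz, zero_add] at hClt
    exact lt_irrefl _ hClt
  set K : Set G := (θ.ker : Set G) with hKdef
  have hKclosed : IsClosed K := by
    have : K = ⇑θ ⁻¹' {1} := rfl
    rw [this]
    exact isClosed_singleton.preimage hθ
  -- kernel elements preserve A
  have hKA : ∀ k ∈ K, ∀ a ∈ A, k * a ∈ A := by
    intro k hk a ha
    have hk1 : θ k = 1 := hk
    simp only [hAdef, Set.mem_preimage, map_mul, hk1, one_mul] at *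
    exact ha
  set D : Set G := C * C⁻¹ with hDdef
  have hDc : IsCompact D := hCc.mul hCc.inv
  -- picking elements of K avoiding finitely many translates of D
  have hpick : ∀ l : List G, ∃ k, k ∈ K ∧ ∀ t ∈ l, k ∉ t • D := by
    intro l
    have hS : IsCompact (⋃ t ∈ l, t • D) := by
      apply (l.finite_toSet).isCompact_biUnion
      intro t _
      exact hDc.smul t
    have : ¬ K ⊆ ⋃ t ∈ l, t • D := by
      intro hsub
      exact hker (hS.of_isClosed_subset hKclosed hsub)
    obtain ⟨k, hkK, hknot⟩ := Set.not_subset.mp this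
    exact ⟨k, hkK, fun t ht hmem => hknot (Set.mem_biUnion ht hmem)⟩
  classical
  let pick : List G → G := fun l => (hpick l).choose
  have pickK : ∀ l, pick l ∈ K := fun l => (hpick l).choose_spec.1
  have pickavoid : ∀ l, ∀ t ∈ l, pick l ∉ t • D := fun l => (hpick l).choose_spec.2
  let seq : ℕ → List G := fun n => Nat.rec [] (fun _ l => pick l :: l) n
  let k : ℕ → G := fun n => pick (seq n)
  have hseq : ∀ n, seq (n + 1) = k n :: seq n := fun n => rfl
  have hmem : ∀ m n, m < n → k m ∈ seq n := by
    intro m n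
    induction n with
    | zero => omega
    | succ n ih =>
      intro h
      rw [hseq]
      rcases Nat.lt_succ_iff_lt_or_eq.mp h with h' | h'
      · exact List.mem_cons_of_mem _ (ih h')
      · rw [h']; exact List.mem_cons_self
  -- disjointness
  have hdisj : Pairwise (Function.onFun Disjoint fun n => k n • C) := by
    have key : ∀ m n, m < n → Disjoint (k m • C) (k n • C) := by
      intro m n hmn
      rw [Set.disjoint_left]
      rintro x ⟨c, hc, rfl⟩ ⟨c', hc', hx⟩
      simp only [smul_eq_mul] at hx
      have heq : k n = k m * (c * c'⁻¹) := by
        rw [← mul_assoc, ← hx, mul_inv_cancel_right]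
      have hmemD : k n ∈ k m • D := by
        rw [heq]
        exact ⟨c * c'⁻¹, Set.mul_mem_mul hc (Set.inv_mem_inv.mpr hc'), rfl⟩
      exact pickavoid (seq n) (k m) (hmem m n hmn) hmemD
    intro m n hmn
    rcases lt_or_gt_of_ne hmn with h | h
    · exact key m n h
    · exact (key n m h).symm
  -- each translate is inside A
  have hsub : ∀ n, k n • C ⊆ A := by
    rintro n x ⟨c, hc, rfl⟩
    exact hKA (k n) (pickK (seq n)) c (hCA hc)
  have hmeasn : ∀ n : ℕ, MeasurableSet (k n • C) :=
    fun n => ((hCc.smul (k n)).isClosed).measurableSet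
  have : μ A = ⊤ := by
    have h1 : μ (⋃ n, k n • C) ≤ μ A := measure_mono (Set.iUnion_subset hsub)
    have h2 : μ (⋃ n, k n • C) = ∑' n : ℕ, μ (k n • C) := measure_iUnion hdisj hmeasn
    have h3 : ∀ n : ℕ, μ (k n • C) = μ C := fun n => measure_smul (μ := μ) (k n) C
    rw [h2] at h1
    simp only [h3] at h1
    rw [ENNReal.tsum_const_eq_top_of_ne_zero hCpos] at h1
    exact top_le_iff.mp h1
  exact htop this
end

section
/- Let G and H be locally compact second countable Hausdorff topological groups with left Haar measures μ and ν respectively, and let θ : G → H be a continuous homomorphism. Then the pushforward measure θ_*(μ) and ν are mutually absolutely continuous (i.e. for every Borel set E ⊆ H, μ(θ⁻¹(E)) = 0 if and only if ν(E) = 0) if and only if θ is surjective. -/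
open MeasureTheory Set Function Pointwise

/-- For a continuous homomorphism `θ : G → H` of locally compact second countable groups
with Haar measures `μ`, `ν`, the pushforward `θ_*(μ)` and `ν` are mutually absolutely
continuous iff `θ` is surjective. -/
theorem pushforward_equivalent_iff_surjective {G H : Type*}
    [Group G] [TopologicalSpace G] [IsTopologicalGroup G] [LocallyCompactSpace G]
    [SecondCountableTopology G] [T2Space G] [MeasurableSpace G] [BorelSpace G]
    [Group H] [TopologicalSpace H] [IsTopologicalGroup H] [LocallyCompactSpace H]
    [SecondCountableTopology H] [T2Space H] [MeasurableSpace H] [BorelSpace H]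
    (μ : Measure G) (ν : Measure H) [μ.IsHaarMeasure] [μ.Regular]
    [ν.IsHaarMeasure] [ν.Regular]
    (θ : G →* H) (hθ : Continuous θ) :
    (∀ E : Set H, MeasurableSet E → (μ (⇑θ ⁻¹' E) = 0 ↔ ν E = 0)) ↔
      Function.Surjective θ := by
  constructor
  · intro hequiv
    -- take a compact set of positive measure in `G`
    have K : TopologicalSpace.PositiveCompacts G := Classical.arbitrary _
    have hKpos : 0 < μ K := Measure.measure_pos_of_nonempty_interior μ K.interior_nonempty
    set E : Set H := θ '' K with hE
    have hEcomp : IsCompact E := K.isCompact.image hθ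
    have hEmeas : MeasurableSet E := hEcomp.isClosed.measurableSet
    have hpre : (K : Set G) ⊆ ⇑θ ⁻¹' E := subset_preimage_image _ _
    have hμpre : μ (⇑θ ⁻¹' E) ≠ 0 := fun h0 =>
      (hKpos.trans_le (measure_mono hpre)).ne' h0
    have hνE : 0 < ν E := by
      rcases eq_or_ne (ν E) 0 with h0 | h0
      · exact absurd ((hequiv E hEmeas).mpr h0) hμpre
      · exact h0.bot_lt
    -- Steinhaus: `E / E` is a neighbourhood of `1`, and it is inside the range of `θ`
    have hnhds : E / E ∈ nhds (1 : H) :=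
      Measure.div_mem_nhds_one_of_haar_pos ν E hEmeas hνE
    have hsub : E / E ⊆ (θ.range : Set H) := by
      rintro x hx
      rcases Set.mem_div.1 hx with ⟨a, ha, b, hb, rfl⟩
      rcases ha with ⟨ga, _, rfl⟩
      rcases hb with ⟨gb, _, rfl⟩
      exact ⟨ga * gb⁻¹, by simp [div_eq_mul_inv]⟩
    have hopen : IsOpen (θ.range : Set H) :=
      Subgroup.isOpen_of_mem_nhds θ.range (Filter.mem_of_superset hnhds hsub)
    intro h
    by_contra hh
    have hclosed : IsClosed (θ.range : Set H) := Subgroup.isClosed_of_isOpen _ hopen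
    set U : Set H := (θ.range : Set H)ᶜ with hU
    have hUopen : IsOpen U := hclosed.isOpen_compl
    have hUpos : 0 < ν U := hUopen.measure_pos ν ⟨h, hh⟩
    have hUpre : ⇑θ ⁻¹' U = ∅ := by
      ext g
      simp only [Set.mem_preimage, Set.mem_empty_iff_false, iff_false, hU,
        Set.mem_compl_iff, not_not, SetLike.mem_coe]
      exact ⟨g, rfl⟩
    have := (hequiv U hUopen.measurableSet).mp (by rw [hUpre]; simp)
    exact hUpos.ne' this
  · intro hsurj E hEmeas
    -- Fubini argument: `μ (θ⁻¹ E) * ν univ = ν E⁻¹ * μ univ`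
    have hm : Measurable fun p : G × H => p.2⁻¹ * θ p.1 :=
      ((continuous_snd.inv).mul (hθ.comp continuous_fst)).measurable
    set S : Set (G × H) := (fun p : G × H => p.2⁻¹ * θ p.1) ⁻¹' E with hS
    have hSmeas : MeasurableSet S := hm hEmeas
    have h1 : (μ.prod ν) S = ν E⁻¹ * μ Set.univ := by
      rw [Measure.prod_apply hSmeas]
      have : ∀ g : G, ν (Prod.mk g ⁻¹' S) = ν E⁻¹ := by
        intro g
        have : Prod.mk g ⁻¹' S = (fun h : H => (θ g)⁻¹ * h) ⁻¹' E⁻¹ := by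
          ext h
          simp only [hS, Set.mem_preimage, Set.mem_inv]
          constructor
          · intro hx; simpa using hx
          · intro hx; simpa using hx
        rw [this, measure_preimage_mul]
      simp only [this, lintegral_const]
    have h2 : (μ.prod ν) S = μ (⇑θ ⁻¹' E) * ν Set.univ := by
      rw [Measure.prod_apply_symm hSmeas]
      have : ∀ h : H, μ ((fun g : G => (g, h)) ⁻¹' S) = μ (⇑θ ⁻¹' E) := by
        intro h
        obtain ⟨g₀, rfl⟩ := hsurj h
        have : (fun g : G => (g, θ g₀)) ⁻¹' S = (fun g : G => g₀⁻¹ * g) ⁻¹' (⇑θ ⁻¹' E) := by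
          ext g
          simp [hS, Set.mem_preimage, mul_comm]
        rw [this, measure_preimage_mul]
      simp only [this, lintegral_const]
    have key : μ (⇑θ ⁻¹' E) * ν Set.univ = ν E⁻¹ * μ Set.univ := by
      rw [← h2, h1]
    have hμu : μ Set.univ ≠ 0 := (isOpen_univ.measure_pos μ ⟨1, trivial⟩).ne'
    have hνu : ν Set.univ ≠ 0 := (isOpen_univ.measure_pos ν ⟨1, trivial⟩).ne'
    constructor
    · intro h0
      rw [h0, zero_mul] at key
      have : ν E⁻¹ = 0 := by
        rcases mul_eq_zero.mp key.symm with h | h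
        · exact h
        · exact absurd h hμu
      exact (measure_inv_null ν).mp this
    · intro h0
      have hinv : ν E⁻¹ = 0 := (measure_inv_null ν).mpr h0
      rw [hinv, zero_mul] at key
      rcases mul_eq_zero.mp key with h | h
      · exact h
      · exact absurd h hνu
end

section
/- Let H and K be complex Hilbert spaces and let M be a set of bounded linear operators from H to K. Suppose that the identity operator on H belongs to the closure, in the weak operator topology of B(H), of the linear span of the set { m* ∘ n : m, n ∈ M } (where m* denotes the Hilbert-space adjoint of m). If x is a bounded operator on H such that m ∘ x ∘ n* = 0 for all m, n ∈ M, then x = 0. -/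
open ContinuousLinearMap

open ContinuousLinearMapWOT in
private lemma wot_vanish {H : Type*}
    [NormedAddCommGroup H] [InnerProductSpace ℂ H] [CompleteSpace H]
    (S : Set (H →WOT[ℂ] H)) (A : H →WOT[ℂ] H)
    (hA : A ∈ closure (↑(Submodule.span ℂ S) : Set (H →WOT[ℂ] H)))
    (a : H) (y : H →L[ℂ] ℂ) (hS : ∀ T ∈ S, y (T a) = 0) : y (A a) = 0 := by
  let L : (H →WOT[ℂ] H) →ₗ[ℂ] ℂ :=
    (LinearMap.proj (R := ℂ) (φ := fun _ : H × (H →L[ℂ] ℂ) => ℂ) (a, y)).comp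
      (ContinuousLinearMapWOT.inducingFn (RingHom.id ℂ) H H)
  have hspan : Submodule.span ℂ S ≤ LinearMap.ker L :=
    Submodule.span_le.mpr (fun T hT => by
      simpa [L, LinearMap.mem_ker] using hS T hT)
  have hclosed : IsClosed {T : H →WOT[ℂ] H | y (T a) = 0} :=
    isClosed_eq (continuous_dual_apply a y) continuous_const
  have hsub : closure (↑(Submodule.span ℂ S) : Set (H →WOT[ℂ] H)) ⊆
      {T : H →WOT[ℂ] H | y (T a) = 0} := by
    refine hclosed.closure_subset_iff.mpr ?_
    intro T hT
    have := hspan hT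
    simpa [L, LinearMap.mem_ker] using this
  exact hsub hA

/-- If `M ⊆ B(H,K)` is such that the identity of `H` belongs to the closure, in the weak
operator topology, of the linear span of `{m* ∘ n : m, n ∈ M}`, then any `x ∈ B(H)` with
`m ∘ x ∘ n* = 0` for all `m, n ∈ M` must be zero. -/
theorem eq_zero_of_tro_essential {H K : Type*}
    [NormedAddCommGroup H] [InnerProductSpace ℂ H] [CompleteSpace H]
    [NormedAddCommGroup K] [InnerProductSpace ℂ K] [CompleteSpace K]
    (M : Set (H →L[ℂ] K))
    (hI : (ContinuousLinearMapWOT.ofCLM : (H →L[ℂ] H) → H →WOT[ℂ] H) (ContinuousLinearMap.id ℂ H) ∈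
      closure (↑(Submodule.span ℂ ((ContinuousLinearMapWOT.ofCLM : (H →L[ℂ] H) → H →WOT[ℂ] H) ''
        {T : H →L[ℂ] H | ∃ m ∈ M, ∃ n ∈ M, T = (adjoint m).comp n})) : Set (H →WOT[ℂ] H)))
    (x : H →L[ℂ] H)
    (hx : ∀ m ∈ M, ∀ n ∈ M, m.comp (x.comp (adjoint n)) = 0) :
    x = 0 := by
  set S := (ContinuousLinearMapWOT.ofCLM : (H →L[ℂ] H) → H →WOT[ℂ] H) ''
      {T : H →L[ℂ] H | ∃ m ∈ M, ∃ n ∈ M, T = (adjoint m).comp n} with hSdef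
  -- Step 1: `x ∘ n* = 0` for every `n ∈ M`.
  have step1 : ∀ n ∈ M, ∀ a : K, x ((adjoint n) a) = 0 := by
    intro n hn a
    rw [← inner_self_eq_zero (𝕜 := ℂ)]
    have h := wot_vanish S _ hI (x ((adjoint n) a)) (innerSL ℂ (x ((adjoint n) a))) ?_
    · simpa [ContinuousLinearMap.toWOT_apply] using h
    · rintro T ⟨T', ⟨m, hm, n', hn', rfl⟩, rfl⟩
      have h0 : n' ((x ((adjoint n) a))) = 0 := by
        have := hx n' hn' n hn
        calc n' (x ((adjoint n) a)) = (n'.comp (x.comp (adjoint n))) a := rfl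
          _ = 0 := by rw [this]; rfl
      calc (innerSL ℂ (x ((adjoint n) a)))
            (((ContinuousLinearMapWOT.ofCLM : (H →L[ℂ] H) → H →WOT[ℂ] H) ((adjoint m).comp n')) (x ((adjoint n) a)))
          = inner ℂ (x ((adjoint n) a)) ((adjoint m) (n' (x ((adjoint n) a)))) := rfl
        _ = 0 := by rw [h0]; simp
  -- Step 2: `x = 0`.
  ext a
  rw [ContinuousLinearMap.zero_apply, ← inner_self_eq_zero (𝕜 := ℂ)]
  have h := wot_vanish S _ hI a ((innerSL ℂ (x a)).comp x) ?_
  · simpa [ContinuousLinearMap.toWOT_apply] using h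
  · rintro T ⟨T', ⟨m, hm, n, hn, rfl⟩, rfl⟩
    have h1 : x ((adjoint m) (n a)) = 0 := step1 m hm (n a)
    calc ((innerSL ℂ (x a)).comp x)
          (((ContinuousLinearMapWOT.ofCLM : (H →L[ℂ] H) → H →WOT[ℂ] H) ((adjoint m).comp n)) a)
        = inner ℂ (x a) (x ((adjoint m) (n a))) := rfl
      _ = 0 := by rw [h1]; simp
end
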